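/- Let a₁,…,a_k be distinct nonzero complex numbers. Then −i ∑_{ℓ=1}^{k} (e^{−i a_ℓ}/a_ℓ) ∏_{j≠ℓ} a_j/(a_j − a_ℓ) + 1 + i ∑_{ℓ=1}^{k} 1/a_ℓ = ∑_{m=0}^{∞} ((−1)^m i^{k+m}/(m+k+1)!) h_m(a₁,…,a_k) ∏_{j=1}^{k} a_j, where the series converges absolutely. -/

import Mathlib

open Finset

/-- Complete homogeneous symmetric polynomial of degree `m` in `k` variables. -/
noncomputable def hsym (k m : ℕ) (a : Fin k → ℂ) : ℂ :=
  ∑ f ∈ Finset.Nat.antidiagonalTuple k m, ∏ j, a j ^ f j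

/-- Vandermonde determinant `∏_{i<j} (a j - a i)`. -/
noncomputable def vand (k : ℕ) (a : Fin k → ℂ) : ℂ :=
  ∏ p ∈ Finset.univ.filter (fun p : Fin k × Fin k => p.1 < p.2), (a p.2 - a p.1)

/-- Vandermonde determinant with the `ℓ`-th variable removed. -/
noncomputable def vandRem (k : ℕ) (a : Fin k → ℂ) (ℓ : Fin k) : ℂ :=
  ∏ p ∈ Finset.univ.filter
      (fun p : Fin k × Fin k => p.1 < p.2 ∧ p.1 ≠ ℓ ∧ p.2 ≠ ℓ), (a p.2 - a p.1)

/-- Elementary symmetric polynomial of degree `j` in `k` variables. -/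
noncomputable def esym (k j : ℕ) (a : Fin k → ℂ) : ℂ :=
  ∑ I ∈ Finset.powersetCard j (Finset.univ : Finset (Fin k)), ∏ i ∈ I, a i

lemma hsym_zero (k : ℕ) (a : Fin k → ℂ) : hsym k 0 a = 1 := by
  simp [hsym, Finset.Nat.antidiagonalTuple_zero_right]

lemma hsym_zero_vars (m : ℕ) (a : Fin 0 → ℂ) : hsym 0 m a = if m = 0 then 1 else 0 := by
  cases m with
  | zero => simp [hsym_zero]
  | succ n => simp [hsym, Finset.Nat.antidiagonalTuple_zero_succ]

lemma hsym_succ (k m : ℕ) (a : Fin (k+1) → ℂ) :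
    hsym (k+1) m a = ∑ j ∈ Finset.range (m+1), a 0 ^ j * hsym k (m - j) (a ∘ Fin.succ) := by
  unfold hsym
  simp only [Finset.mul_sum]
  rw [Finset.sum_sigma']
  refine Finset.sum_nbij' (fun f => ⟨f 0, Fin.tail f⟩) (fun p => Fin.cons p.1 p.2) ?_ ?_ ?_ ?_ ?_
  · intro f hf
    simp only [Finset.Nat.mem_antidiagonalTuple] at hf
    simp only [Finset.mem_sigma, Finset.mem_range, Finset.Nat.mem_antidiagonalTuple]
    rw [Fin.sum_univ_succ] at hf
    refine ⟨by omega, ?_⟩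
    simp only [Fin.tail]; omega
  · rintro ⟨j, g⟩ hp
    simp only [Finset.mem_sigma, Finset.mem_range, Finset.Nat.mem_antidiagonalTuple] at hp ⊢
    rw [Fin.sum_univ_succ]
    simp only [Fin.cons_zero, Fin.cons_succ]
    omega
  · intro f hf; simp [Fin.cons_self_tail]
  · rintro ⟨j, g⟩ hp; simp [Fin.tail]
  · intro f hf
    simp only
    rw [Fin.prod_univ_succ]
    simp [Fin.tail]

lemma erase_castSucc_prod {k : ℕ} (g : Fin (k+1) → ℂ) (i : Fin k) :
    ∏ j ∈ univ.erase (Fin.castSucc i), g j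
      = g (Fin.last k) * ∏ j ∈ univ.erase i, g (Fin.castSucc j) := by
  have h1 : (univ : Finset (Fin (k+1))).erase (Fin.castSucc i)
      = insert (Fin.last k) ((univ.erase i).image Fin.castSucc) := by
    ext j
    simp only [mem_erase, mem_univ, and_true, mem_insert, mem_image]
    constructor
    · intro hj
      rcases Fin.eq_castSucc_or_eq_last j with ⟨j', rfl⟩ | rfl
      · exact Or.inr ⟨j', fun h => hj (by rw [h]), rfl⟩
      · exact Or.inl rfl
    · rintro (rfl | ⟨j', hne, rfl⟩)
      · exact (Fin.castSucc_lt_last i).ne'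
      · exact fun h => hne (Fin.castSucc_injective _ h)
  rw [h1, prod_insert, prod_image]
  · intro x _ y _ h; exact Fin.castSucc_injective _ h
  · simp only [mem_image]
    rintro ⟨j', _, h⟩
    exact absurd h (Fin.castSucc_lt_last j').ne

lemma erase_last_prod {k : ℕ} (g : Fin (k+1) → ℂ) :
    ∏ j ∈ univ.erase (Fin.last k), g j = ∏ j : Fin k, g (Fin.castSucc j) := by
  have h1 : (univ : Finset (Fin (k+1))).erase (Fin.last k) = univ.image Fin.castSucc := by
    ext j
    simp only [mem_erase, mem_univ, and_true, true_and, mem_image]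
    constructor
    · intro hj
      rcases Fin.eq_castSucc_or_eq_last j with ⟨j', rfl⟩ | rfl
      · exact ⟨j', rfl⟩
      · exact absurd rfl hj
    · rintro ⟨j', rfl⟩
      exact (Fin.castSucc_lt_last j').ne
  rw [h1, prod_image]
  intro x _ y _ h; exact Fin.castSucc_injective _ h

lemma pf (k : ℕ) : ∀ (a : Fin (k+1) → ℂ), Function.Injective a → ∀ (x : ℂ), (∀ j, x ≠ a j) →
    (∏ j, (x - a j))⁻¹ = ∑ ℓ, (x - a ℓ)⁻¹ * (∏ j ∈ univ.erase ℓ, (a ℓ - a j))⁻¹ := by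
  induction k with
  | zero =>
    intro a _ x _
    simp [Fin.sum_univ_one, Fin.prod_univ_one]
  | succ k ih =>
    intro a hinj x hx
    have hbinj : Function.Injective (a ∘ Fin.castSucc) := hinj.comp (Fin.castSucc_injective _)
    set b : Fin (k+1) → ℂ := a ∘ Fin.castSucc with hb
    set c : ℂ := a (Fin.last (k+1)) with hc
    have hab : ∀ i : Fin (k+1), a i.castSucc = b i := fun i => rfl
    have hbc : ∀ ℓ, b ℓ ≠ c := fun ℓ h =>
      absurd (hinj h) (Fin.castSucc_lt_last ℓ).ne
    have hxb : ∀ j, x ≠ b j := fun j => hx _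
    have hxc : x ≠ c := hx _
    have hcb : ∀ j, c ≠ b j := fun j h => hbc j h.symm
    have hpfc := ih b hbinj c hcb
    have key : (∏ j, (x - a j))⁻¹ = (∏ j, (x - b j))⁻¹ * (x - c)⁻¹ := by
      rw [Fin.prod_univ_castSucc, mul_inv]
      simp only [hab, ← hc]
    have hR : ∀ i : Fin (k+1), (∏ j ∈ univ.erase (Fin.castSucc i), (a (Fin.castSucc i) - a j))
        = (b i - c) * ∏ j ∈ univ.erase i, (b i - b j) := by
      intro i
      rw [erase_castSucc_prod (fun j => a (Fin.castSucc i) - a j) i]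
      simp only [hab, ← hc]
    have hL : (∏ j ∈ univ.erase (Fin.last (k+1)), (a (Fin.last (k+1)) - a j))
        = ∏ j, (c - b j) := by
      rw [erase_last_prod (fun j => a (Fin.last (k+1)) - a j)]
      simp only [hab, ← hc]
    rw [key, ih b hbinj x hxb, sum_mul]
    conv_rhs => rw [Fin.sum_univ_castSucc]
    simp only [hR, hL]
    simp only [hab, ← hc]
    rw [hpfc, mul_sum, ← sum_add_distrib]
    refine sum_congr rfl fun ℓ _ => ?_
    have h1 : x - b ℓ ≠ 0 := sub_ne_zero.mpr (hxb ℓ)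
    have h2 : x - c ≠ 0 := sub_ne_zero.mpr hxc
    have h3 : b ℓ - c ≠ 0 := sub_ne_zero.mpr (hbc ℓ)
    have h4 : (∏ j ∈ univ.erase ℓ, (b ℓ - b j)) ≠ 0 := by
      refine prod_ne_zero_iff.mpr fun j hj => sub_ne_zero.mpr fun h => ?_
      exact (mem_erase.mp hj).1 (hbinj h).symm
    have h5 : c - b ℓ ≠ 0 := sub_ne_zero.mpr (hcb ℓ)
    field_simp
    ring
lemma erase_succ_prod {k : ℕ} (g : Fin (k+1) → ℂ) (i : Fin k) :
    ∏ j ∈ univ.erase (Fin.succ i), g j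
      = g 0 * ∏ j ∈ univ.erase i, g (Fin.succ j) := by
  have h1 : (univ : Finset (Fin (k+1))).erase (Fin.succ i)
      = insert 0 ((univ.erase i).image Fin.succ) := by
    ext j
    simp only [mem_erase, mem_univ, and_true, true_and, mem_insert, mem_image]
    constructor
    · intro hj
      rcases Fin.eq_zero_or_eq_succ j with rfl | ⟨j', rfl⟩
      · exact Or.inl rfl
      · exact Or.inr ⟨j', fun h => hj (by rw [h]), rfl⟩
    · rintro (rfl | ⟨j', hne, rfl⟩)
      · exact (Fin.succ_ne_zero i).symm
      · exact fun h => hne (Fin.succ_injective _ h)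
  rw [h1, prod_insert, prod_image]
  · intro x _ y _ h; exact Fin.succ_injective _ h
  · simp only [mem_image]
    rintro ⟨j', _, h⟩
    exact Fin.succ_ne_zero j' h

lemma erase_zero_prod {k : ℕ} (g : Fin (k+1) → ℂ) :
    ∏ j ∈ univ.erase (0 : Fin (k+1)), g j = ∏ j : Fin k, g (Fin.succ j) := by
  have h1 : (univ : Finset (Fin (k+1))).erase 0 = univ.image Fin.succ := by
    ext j
    simp only [mem_erase, mem_univ, and_true, true_and, mem_image]
    constructor
    · intro hj
      rcases Fin.eq_zero_or_eq_succ j with rfl | ⟨j', rfl⟩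
      · exact absurd rfl hj
      · exact ⟨j', rfl⟩
    · rintro ⟨j', rfl⟩
      exact Fin.succ_ne_zero j'
  rw [h1, prod_image]
  intro x _ y _ h; exact Fin.succ_injective _ h
lemma hsym_one (a : Fin 1 → ℂ) (n : ℕ) : hsym 1 n a = a 0 ^ n := by
  simp [hsym, Finset.Nat.antidiagonalTuple_one, Fin.prod_univ_one]

lemma key_dd (k : ℕ) : ∀ (a : Fin k → ℂ), Function.Injective a → ∀ n : ℕ,
    ∑ ℓ, a ℓ ^ n * (∏ j ∈ univ.erase ℓ, (a ℓ - a j))⁻¹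
      = if k ≤ n + 1 then hsym k (n + 1 - k) a else 0 := by
  induction k with
  | zero =>
    intro a _ n
    rw [if_pos (Nat.zero_le _)]
    simp [hsym_zero_vars]
  | succ k ih =>
    intro a hinj n
    cases k with
    | zero =>
      rw [if_pos (by omega)]
      have h2 : n + 1 - 1 = n := by omega
      rw [h2, hsym_one, Fin.sum_univ_one]
      have h3 : (univ : Finset (Fin 1)).erase 0 = ∅ := by
        ext j; simp [Subsingleton.elim j 0]
      rw [h3]
      simp
    | succ K =>
      have htinj : Function.Injective (a ∘ Fin.succ) := hinj.comp (Fin.succ_injective _)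
      set t : Fin (K+1) → ℂ := a ∘ Fin.succ with ht
      set a0 : ℂ := a 0 with ha0
      have hta : ∀ i : Fin (K+1), a i.succ = t i := fun i => rfl
      have h0t : ∀ i, a0 ≠ t i := fun i h => Fin.succ_ne_zero i (hinj h).symm
      have hPne : ∀ i : Fin (K+1), (∏ j ∈ univ.erase i, (t i - t j)) ≠ 0 := by
        intro i
        refine prod_ne_zero_iff.mpr fun j hj => sub_ne_zero.mpr fun h => ?_
        exact (mem_erase.mp hj).1 (htinj h).symm
      have hEr : ∀ i : Fin (K+1),
          (∏ j ∈ univ.erase i.succ, (a i.succ - a j))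
            = (t i - a0) * ∏ j ∈ univ.erase i, (t i - t j) := by
        intro i
        rw [erase_succ_prod (fun j => a i.succ - a j) i]
        simp only [hta, ← ha0]
      have hpt : ∀ i : Fin (K+1), a i.succ ^ n * (∏ j ∈ univ.erase i.succ, (a i.succ - a j))⁻¹
          = (∑ r ∈ range n, t i ^ r * a0 ^ (n-1-r)) * (∏ j ∈ univ.erase i, (t i - t j))⁻¹
            - a0 ^ n * ((a0 - t i)⁻¹ * (∏ j ∈ univ.erase i, (t i - t j))⁻¹) := by
        intro i
        rw [hEr i, hta i]
        have h1 : t i - a0 ≠ 0 := sub_ne_zero.mpr fun h => h0t i h.symm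
        have h3 : a0 - t i ≠ 0 := sub_ne_zero.mpr (h0t i)
        have hg : t i ^ n = (∑ r ∈ range n, t i ^ r * a0 ^ (n-1-r)) * (t i - a0) + a0 ^ n := by
          linear_combination -geom_sum₂_mul (t i) a0 n
        rw [hg, mul_inv, show a0 - t i = -(t i - a0) by ring, inv_neg]
        linear_combination ((∑ r ∈ range n, t i ^ r * a0 ^ (n-1-r)) *
          (∏ j ∈ univ.erase i, (t i - t j))⁻¹) * mul_inv_cancel₀ h1
      rw [Fin.sum_univ_succ, erase_zero_prod (fun j => a 0 - a j),
        Finset.sum_congr rfl (fun i _ => hpt i), sum_sub_distrib, ← mul_sum,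
        ← pf K t htinj a0 h0t]
      have hz : (∏ j : Fin (K+1), (a 0 - a j.succ)) = ∏ j, (a0 - t j) := rfl
      rw [hz]
      rw [show ∀ x y : ℂ, x + (y - x) = y from fun x y => by ring]
      have hswap : ∑ i : Fin (K+1), (∑ r ∈ range n, t i ^ r * a0 ^ (n-1-r)) *
          (∏ j ∈ univ.erase i, (t i - t j))⁻¹
          = ∑ r ∈ range n, a0 ^ (n-1-r) * ∑ i, t i ^ r * (∏ j ∈ univ.erase i, (t i - t j))⁻¹ := by
        simp only [sum_mul]
        rw [Finset.sum_comm]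
        refine sum_congr rfl fun r _ => ?_
        rw [mul_sum]
        exact sum_congr rfl fun i _ => by ring
      rw [hswap, Finset.sum_congr rfl (fun r _ => by rw [ih t htinj r])]
      by_cases hn : K + 1 ≤ n
      · rw [if_pos (by omega)]
        obtain ⟨d, rfl⟩ : ∃ d, n = K + 1 + d := ⟨n - (K+1), by omega⟩
        rw [show K + 1 + d + 1 - (K + 1 + 1) = d by omega]
        rw [range_eq_Ico, ← Finset.sum_Ico_consecutive _ (Nat.zero_le K)
          (by omega : K ≤ K + 1 + d)]
        rw [show ∑ r ∈ Ico 0 K, a0 ^ (K + 1 + d - 1 - r) *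
            (if K + 1 ≤ r + 1 then hsym (K+1) (r + 1 - (K+1)) t else 0) = 0 from
          sum_eq_zero fun r hr => by
            rw [if_neg (by simp only [mem_Ico] at hr; omega), mul_zero], zero_add]
        rw [Finset.sum_Ico_eq_sum_range]
        rw [show K + 1 + d - K = d + 1 by omega]
        rw [← Finset.sum_range_reflect, hsym_succ]
        refine sum_congr rfl fun j hj => ?_
        simp only [mem_range] at hj
        rw [if_pos (by omega)]
        rw [show K + 1 + d - 1 - (K + (d + 1 - 1 - j)) = j by omega,
          show K + (d + 1 - 1 - j) + 1 - (K + 1) = d - j by omega]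
      · rw [if_neg (by omega)]
        exact sum_eq_zero fun r hr => by
          rw [if_neg (by simp only [mem_range] at hr; omega), mul_zero]

lemma hsym_deg_one : ∀ (k : ℕ) (a : Fin k → ℂ), hsym k 1 a = ∑ j, a j := by
  intro k
  induction k with
  | zero => intro a; simp [hsym_zero_vars]
  | succ k ih =>
    intro a
    rw [hsym_succ, Finset.sum_range_succ, Finset.sum_range_succ, Finset.sum_range_zero,
      ih, hsym_zero, Fin.sum_univ_succ]
    simp [Function.comp]
    ring

lemma neg_one_pow_inv (K : ℕ) : ((-1:ℂ)^K)⁻¹ = (-1)^K := by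
  rw [← inv_pow, inv_neg, inv_one]

lemma card_erase_univ {K : ℕ} (ℓ : Fin (K+1)) :
    ((Finset.univ : Finset (Fin (K+1))).erase ℓ).card = K := by
  rw [Finset.card_erase_of_mem (Finset.mem_univ _)]
  simp

lemma prod_erase_self {K : ℕ} (a : Fin (K+1) → ℂ) (ha : ∀ j, a j ≠ 0) (ℓ : Fin (K+1)) :
    ∏ j ∈ univ.erase ℓ, a j = (∏ j, a j) * (a ℓ)⁻¹ := by
  have h := Finset.mul_prod_erase univ a (Finset.mem_univ ℓ)
  rw [← h, mul_comm (a ℓ), mul_assoc, mul_inv_cancel₀ (ha ℓ), mul_one]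

lemma prod_sub_swap {K : ℕ} (a : Fin (K+1) → ℂ) (ℓ : Fin (K+1)) :
    ∏ j ∈ univ.erase ℓ, (a j - a ℓ) = (-1)^K * ∏ j ∈ univ.erase ℓ, (a ℓ - a j) := by
  calc ∏ j ∈ univ.erase ℓ, (a j - a ℓ) = ∏ j ∈ univ.erase ℓ, (-1) * (a ℓ - a j) :=
        Finset.prod_congr rfl (fun j _ => by ring)
    _ = (-1)^(((Finset.univ : Finset (Fin (K+1))).erase ℓ).card) * ∏ j ∈ univ.erase ℓ, (a ℓ - a j) := by
        rw [Finset.prod_mul_distrib, Finset.prod_const]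
    _ = _ := by rw [card_erase_univ]

lemma Qne {K : ℕ} (a : Fin (K+1) → ℂ) (hinj : Function.Injective a) (ℓ : Fin (K+1)) :
    (∏ j ∈ univ.erase ℓ, (a ℓ - a j)) ≠ 0 := by
  refine prod_ne_zero_iff.mpr fun j hj => sub_ne_zero.mpr fun h => ?_
  exact (mem_erase.mp hj).1 (hinj h).symm

lemma Wconv {K : ℕ} (a : Fin (K+1) → ℂ) (hinj : Function.Injective a) (ha : ∀ j, a j ≠ 0)
    (ℓ : Fin (K+1)) :
    ∏ j ∈ univ.erase ℓ, (a j / (a j - a ℓ))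
      = (-1)^K * ((∏ j, a j) * (a ℓ)⁻¹) * (∏ j ∈ univ.erase ℓ, (a ℓ - a j))⁻¹ := by
  rw [Finset.prod_div_distrib, prod_erase_self a ha ℓ, prod_sub_swap a ℓ, div_eq_mul_inv,
    mul_inv, neg_one_pow_inv]
  ring

lemma S1 {K : ℕ} (a : Fin (K+1) → ℂ) (hinj : Function.Injective a) (ha : ∀ j, a j ≠ 0) :
    ∑ ℓ, (a ℓ)⁻¹ * (∏ j ∈ univ.erase ℓ, (a ℓ - a j))⁻¹ = (-1)^K * (∏ j, a j)⁻¹ := by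
  have hx : ∀ j, (0:ℂ) ≠ a j := fun j h => ha j h.symm
  have h := pf K a hinj 0 hx
  simp only [zero_sub] at h
  have h2 : (∏ x : Fin (K+1), -a x) = (-1)^(K+1) * ∏ x, a x := by
    calc (∏ x : Fin (K+1), -a x) = ∏ x : Fin (K+1), (-1) * a x :=
        Finset.prod_congr rfl fun x _ => by ring
      _ = (-1)^(Finset.univ : Finset (Fin (K+1))).card * ∏ x, a x := by
        rw [Finset.prod_mul_distrib, Finset.prod_const]
      _ = _ := by rw [Finset.card_univ, Fintype.card_fin]
  rw [h2, mul_inv, neg_one_pow_inv] at h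
  simp only [inv_neg, neg_mul] at h
  rw [Finset.sum_neg_distrib] at h
  linear_combination h

lemma S2 {K : ℕ} (a : Fin (K+1) → ℂ) (hinj : Function.Injective a) (ha : ∀ j, a j ≠ 0) :
    ∑ ℓ, (a ℓ)⁻¹ * (a ℓ)⁻¹ * (∏ j ∈ univ.erase ℓ, (a ℓ - a j))⁻¹
      = (-1)^K * (∏ j, a j)⁻¹ * ∑ j, (a j)⁻¹ := by
  set b : Fin (K+1) → ℂ := fun i => (a i)⁻¹ with hb
  have hbinj : Function.Injective b := fun i j h => hinj (inv_injective h)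
  have hkey := key_dd (K+1) b hbinj (K+1)
  rw [if_pos (by omega), show K+1+1-(K+1) = 1 by omega, hsym_deg_one] at hkey
  have h3 : (∏ j, a j) ≠ 0 := prod_ne_zero_iff.mpr fun j _ => ha j
  have hterm : ∀ ℓ, b ℓ^(K+1) * (∏ j ∈ univ.erase ℓ, (b ℓ - b j))⁻¹
      = (-1)^K * (∏ j, a j) * ((a ℓ)⁻¹ * (a ℓ)⁻¹ * (∏ j ∈ univ.erase ℓ, (a ℓ - a j))⁻¹) := by
    intro ℓ
    have hprod : ∏ j ∈ univ.erase ℓ, (b ℓ - b j)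
        = ((-1)^K * ∏ j ∈ univ.erase ℓ, (a ℓ - a j)) *
          (((a ℓ)⁻¹)^K * ((∏ j, a j) * (a ℓ)⁻¹)⁻¹) := by
      calc ∏ j ∈ univ.erase ℓ, (b ℓ - b j)
          = ∏ j ∈ univ.erase ℓ, ((a j - a ℓ) * ((a ℓ)⁻¹ * (a j)⁻¹)) := by
            refine Finset.prod_congr rfl fun j _ => ?_
            have h1 := ha ℓ; have h2 := ha j
            simp only [hb]
            linear_combination (-(a ℓ)⁻¹) * mul_inv_cancel₀ h2 + (a j)⁻¹ * mul_inv_cancel₀ h1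
        _ = (∏ j ∈ univ.erase ℓ, (a j - a ℓ)) * ∏ j ∈ univ.erase ℓ, ((a ℓ)⁻¹ * (a j)⁻¹) :=
            Finset.prod_mul_distrib
        _ = _ := by
            rw [prod_sub_swap a ℓ, Finset.prod_mul_distrib, Finset.prod_const, card_erase_univ,
              Finset.prod_inv_distrib, prod_erase_self a ha ℓ]
    rw [hprod]
    have h1 := ha ℓ
    have h2 : (∏ j ∈ univ.erase ℓ, (a ℓ - a j)) ≠ 0 := Qne a hinj ℓ
    simp only [hb]
    field_simp
    have hu : ((-1:ℂ)^K) * ((-1:ℂ)^K) = 1 := by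
      rw [← pow_add, ← two_mul, pow_mul, neg_one_sq, one_pow]
    linear_combination (-(1/a ℓ)^K) * hu + ((a ℓ)⁻¹)^K * mul_inv_cancel₀ h1
  rw [Finset.sum_congr rfl (fun ℓ _ => hterm ℓ), ← Finset.mul_sum] at hkey
  have hne : ((-1:ℂ)^K * ∏ j, a j) ≠ 0 := mul_ne_zero (pow_ne_zero _ (by norm_num)) h3
  have h4 : ∑ ℓ, (a ℓ)⁻¹ * (a ℓ)⁻¹ * (∏ j ∈ univ.erase ℓ, (a ℓ - a j))⁻¹
      = ((-1:ℂ)^K * ∏ j, a j)⁻¹ * ∑ j, b j := by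
    rw [← hkey, ← mul_assoc, inv_mul_cancel₀ hne, one_mul]
  rw [h4, mul_inv, neg_one_pow_inv]

set_option maxHeartbeats 1000000 in
lemma summable_norm_term (k : ℕ) (a : Fin k → ℂ) :
    Summable (fun m : ℕ =>
      ‖((-1 : ℂ) ^ m * Complex.I ^ (k + m) / (Nat.factorial (m + k + 1) : ℂ)) *
        hsym k m a * ∏ j : Fin k, a j‖) := by
  set M : ℝ := 1 + ∑ j, ‖a j‖ with hM
  have hs0 : (0:ℝ) ≤ ∑ j, ‖a j‖ := Finset.sum_nonneg fun j _ => norm_nonneg _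
  have hM1 : (1:ℝ) ≤ M := by rw [hM]; linarith
  have hM0 : (0:ℝ) ≤ M := by linarith
  have hMa : ∀ j, ‖a j‖ ≤ M := fun j => by
    have := Finset.single_le_sum (fun i (_ : i ∈ univ) => norm_nonneg (a i)) (mem_univ j)
    rw [hM]; linarith
  have hcard : ∀ m, ((Finset.Nat.antidiagonalTuple k m).card : ℝ) ≤ ((m+1:ℕ):ℝ)^k := by
    intro m
    have hsub : Finset.Nat.antidiagonalTuple k m ⊆
        Fintype.piFinset (fun _ : Fin k => Finset.range (m+1)) := by
      intro f hf
      rw [Finset.Nat.mem_antidiagonalTuple] at hf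
      rw [Fintype.mem_piFinset]
      intro j
      rw [Finset.mem_range]
      have : f j ≤ m := hf ▸ Finset.single_le_sum (fun i _ => Nat.zero_le _) (mem_univ j)
      omega
    have h1 := Finset.card_le_card hsub
    have h2 : (Fintype.piFinset (fun _ : Fin k => Finset.range (m+1))).card = (m+1)^k := by
      rw [Fintype.card_piFinset]
      simp
    rw [h2] at h1
    exact_mod_cast h1
  have hh : ∀ m, ‖hsym k m a‖ ≤ ((m+1:ℕ):ℝ)^k * M^m := by
    intro m
    have h1 : ‖hsym k m a‖ ≤ ∑ f ∈ Finset.Nat.antidiagonalTuple k m, M^m := by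
      refine (norm_sum_le _ _).trans (Finset.sum_le_sum fun f hf => ?_)
      rw [Finset.Nat.mem_antidiagonalTuple] at hf
      calc ‖∏ j, a j ^ f j‖ = ∏ j, ‖a j‖ ^ f j := by rw [norm_prod]; simp [norm_pow]
        _ ≤ ∏ j, M ^ f j := Finset.prod_le_prod (fun j _ => by positivity)
            (fun j _ => pow_le_pow_left₀ (norm_nonneg _) (hMa j) _)
        _ = M ^ (∑ j, f j) := by rw [← Finset.prod_pow_eq_pow_sum]
        _ = M ^ m := by rw [hf]
    rw [Finset.sum_const, nsmul_eq_mul] at h1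
    calc ‖hsym k m a‖ ≤ ((Finset.Nat.antidiagonalTuple k m).card : ℝ) * M^m := h1
      _ ≤ ((m+1:ℕ):ℝ)^k * M^m := mul_le_mul_of_nonneg_right (hcard m) (by positivity)
  have hb : ∀ m : ℕ, ‖((-1 : ℂ) ^ m * Complex.I ^ (k + m) / (Nat.factorial (m + k + 1) : ℂ)) *
        hsym k m a * ∏ j : Fin k, a j‖
      ≤ (‖∏ j : Fin k, a j‖ * 2^k) * ((2^k*M)^m / (m.factorial : ℝ)) := by
    intro m
    have hnorm : ‖((-1 : ℂ) ^ m * Complex.I ^ (k + m) / (Nat.factorial (m + k + 1) : ℂ)) *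
          hsym k m a * ∏ j : Fin k, a j‖
        = ‖hsym k m a‖ * ‖∏ j : Fin k, a j‖ / ((m+k+1).factorial : ℝ) := by
      rw [norm_mul, norm_mul, norm_div, norm_mul, norm_pow, norm_pow, norm_neg, norm_one,
        one_pow, Complex.norm_I, one_pow, one_mul, Complex.norm_natCast]
      ring
    rw [hnorm]
    have f2 : (0:ℝ) < (m.factorial : ℝ) := by exact_mod_cast Nat.factorial_pos m
    have f3 : (0:ℝ) < ((m+k+1).factorial : ℝ) := by exact_mod_cast Nat.factorial_pos _
    have f1 : (m.factorial : ℝ) ≤ ((m+k+1).factorial : ℝ) := by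
      exact_mod_cast Nat.factorial_le (by omega)
    have hpow : ((m+1:ℕ):ℝ)^k ≤ 2^k * (2^k)^m := by
      have hm2 : ((m+1:ℕ):ℝ) ≤ 2 * 2^m := by
        have : m + 1 ≤ 2 * 2^m := by
          have := @Nat.lt_two_pow_self m
          omega
        exact_mod_cast this
      calc ((m+1:ℕ):ℝ)^k ≤ (2 * 2^m)^k := pow_le_pow_left₀ (by positivity) hm2 _
        _ = 2^k * ((2:ℝ)^m)^k := by rw [mul_pow]
        _ = 2^k * (2^k)^m := by rw [← pow_mul, ← pow_mul, Nat.mul_comm]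
    have hhh : ‖hsym k m a‖ ≤ (2^k * (2^k)^m) * M^m :=
      (hh m).trans (mul_le_mul_of_nonneg_right hpow (by positivity))
    have hfinal : ‖hsym k m a‖ * ‖∏ j : Fin k, a j‖ / ((m+k+1).factorial : ℝ)
        ≤ ((2^k * (2^k)^m) * M^m) * ‖∏ j : Fin k, a j‖ / (m.factorial : ℝ) := by
      gcongr
    refine hfinal.trans (le_of_eq ?_)
    rw [mul_pow]
    ring
  refine Summable.of_nonneg_of_le (fun m => norm_nonneg _) hb ?_
  exact (Real.summable_pow_div_factorial (2^k*M)).mul_left _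

lemma hcoef (K m : ℕ) : (-Complex.I)^(m+K+3) * ((-1:ℂ)^K) = (-1)^m * Complex.I^((K+1)+m) := by
  have hu : ((-1:ℂ)^K) * ((-1:ℂ)^K) = 1 := by
    rw [← pow_add, ← two_mul, pow_mul, neg_one_sq, one_pow]
  rw [neg_pow, show m+K+3 = (K+1+m)+2 by ring, pow_add Complex.I, Complex.I_sq]
  linear_combination ((-1:ℂ)^m * Complex.I^(K+1+m)) * hu

set_option maxHeartbeats 1000000 in
theorem stmt16 (k : ℕ) (a : Fin k → ℂ) (ha : ∀ ℓ, a ℓ ≠ 0)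
    (hdist : Function.Injective a) :
    Summable (fun m : ℕ =>
      ‖((-1 : ℂ) ^ m * Complex.I ^ (k + m) / (Nat.factorial (m + k + 1) : ℂ)) *
        hsym k m a * ∏ j : Fin k, a j‖) ∧
    -Complex.I * ∑ ℓ : Fin k, (Complex.exp (-Complex.I * a ℓ) / a ℓ) *
        ∏ j ∈ Finset.univ.erase ℓ, a j / (a j - a ℓ) + 1 +
      Complex.I * ∑ ℓ : Fin k, (a ℓ)⁻¹ =
    ∑' m : ℕ,
      ((-1 : ℂ) ^ m * Complex.I ^ (k + m) / (Nat.factorial (m + k + 1) : ℂ)) *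
        hsym k m a * ∏ j : Fin k, a j := by
  refine ⟨summable_norm_term k a, ?_⟩
  have hP : (∏ j, a j) ≠ 0 := prod_ne_zero_iff.mpr fun j _ => ha j
  cases k with
  | zero =>
    rw [tsum_eq_single 0 (fun m hm => by
      simp [hsym_zero_vars, hm])]
    simp [hsym_zero_vars]
  | succ K =>
    have hu : ((-1:ℂ)^K) * ((-1:ℂ)^K) = 1 := by
      rw [← pow_add, ← two_mul, pow_mul, neg_one_sq, one_pow]
    set f : ℕ → ℂ := fun n => ∑ ℓ, (-Complex.I * a ℓ)^n / (n.factorial : ℂ) *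
      (-Complex.I * ((a ℓ)⁻¹ * ((-1)^K * ((∏ j, a j) * (a ℓ)⁻¹) *
        (∏ j ∈ univ.erase ℓ, (a ℓ - a j))⁻¹))) with hf
    have hgsum : ∀ ℓ : Fin (K+1), Summable (fun n : ℕ => (-Complex.I * a ℓ)^n / (n.factorial : ℂ) *
        (-Complex.I * ((a ℓ)⁻¹ * ((-1)^K * ((∏ j, a j) * (a ℓ)⁻¹) *
          (∏ j ∈ univ.erase ℓ, (a ℓ - a j))⁻¹)))) :=
      fun ℓ => (NormedSpace.expSeries_div_summable (-Complex.I * a ℓ)).mul_right _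
    have hfsum : Summable f := summable_sum (fun ℓ _ => hgsum ℓ)
    have hexp : ∀ z : ℂ, Complex.exp z = ∑' n : ℕ, z^n / (n.factorial : ℂ) := by
      intro z
      rw [Complex.exp_eq_exp_ℂ, NormedSpace.exp_eq_tsum_div]
    have hLHS1 : -Complex.I * ∑ ℓ : Fin (K+1), (Complex.exp (-Complex.I * a ℓ) / a ℓ) *
        ∏ j ∈ Finset.univ.erase ℓ, a j / (a j - a ℓ) = ∑' n, f n := by
      rw [hf, Summable.tsum_finsetSum (fun ℓ _ => hgsum ℓ), Finset.mul_sum]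
      refine sum_congr rfl fun ℓ _ => ?_
      rw [tsum_mul_right, ← hexp, Wconv a hdist ha ℓ, div_eq_mul_inv]
      ring
    have hf0 : f 0 = -Complex.I * ∑ ℓ, (a ℓ)⁻¹ := by
      simp only [hf]
      simp only [pow_zero, Nat.factorial_zero, Nat.cast_one]
      have step : ∀ ℓ : Fin (K+1), (1:ℂ) / 1 *
          (-Complex.I * ((a ℓ)⁻¹ * ((-1)^K * ((∏ j, a j) * (a ℓ)⁻¹) *
            (∏ j ∈ univ.erase ℓ, (a ℓ - a j))⁻¹)))
          = (-Complex.I * ((-1)^K * (∏ j, a j))) *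
            ((a ℓ)⁻¹ * (a ℓ)⁻¹ * (∏ j ∈ univ.erase ℓ, (a ℓ - a j))⁻¹) := by
        intro ℓ; ring
      rw [Finset.sum_congr rfl fun ℓ _ => step ℓ, ← Finset.mul_sum, S2 a hdist ha]
      linear_combination (-Complex.I * (∑ j, (a j)⁻¹) * ((∏ j, a j) * (∏ j, a j)⁻¹)) * hu +
        (-Complex.I * (∑ j, (a j)⁻¹)) * (mul_inv_cancel₀ hP)
    have hf1 : f 1 = -1 := by
      simp only [hf]
      have step : ∀ ℓ : Fin (K+1), (-Complex.I * a ℓ)^1 / ((Nat.factorial 1 : ℕ) : ℂ) *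
          (-Complex.I * ((a ℓ)⁻¹ * ((-1)^K * ((∏ j, a j) * (a ℓ)⁻¹) *
            (∏ j ∈ univ.erase ℓ, (a ℓ - a j))⁻¹)))
          = (-((-1)^K * (∏ j, a j))) *
            ((a ℓ)⁻¹ * (∏ j ∈ univ.erase ℓ, (a ℓ - a j))⁻¹) := by
        intro ℓ
        have hinv := mul_inv_cancel₀ (ha ℓ)
        simp only [pow_one, Nat.factorial_one, Nat.cast_one, div_one]
        linear_combination ((a ℓ * (a ℓ)⁻¹) * ((-1:ℂ)^K * (∏ j, a j) * (a ℓ)⁻¹ *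
            (∏ j ∈ univ.erase ℓ, (a ℓ - a j))⁻¹)) * Complex.I_mul_I +
          (-((-1:ℂ)^K * (∏ j, a j) * (a ℓ)⁻¹ *
            (∏ j ∈ univ.erase ℓ, (a ℓ - a j))⁻¹)) * hinv
      rw [Finset.sum_congr rfl fun ℓ _ => step ℓ, ← Finset.mul_sum, S1 a hdist ha]
      linear_combination (-((∏ j, a j) * (∏ j, a j)⁻¹)) * hu +
        (-1 : ℂ) * (mul_inv_cancel₀ hP)
    have hf2 : ∀ n, f (n+2) = (-Complex.I)^(n+3) / (((n+2).factorial : ℕ) : ℂ) *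
        ((-1)^K * (∏ j, a j)) * (if K ≤ n then hsym (K+1) (n-K) a else 0) := by
      intro n
      have hk := key_dd (K+1) a hdist n
      have hif : (if K+1 ≤ n+1 then hsym (K+1) (n+1-(K+1)) a else 0)
          = (if K ≤ n then hsym (K+1) (n-K) a else 0) := by
        by_cases h : K ≤ n
        · rw [if_pos (by omega), if_pos h, show n+1-(K+1) = n-K by omega]
        · rw [if_neg (by omega), if_neg h]
      rw [hif] at hk
      simp only [hf]
      have step : ∀ ℓ : Fin (K+1), (-Complex.I * a ℓ)^(n+2) / (((n+2).factorial : ℕ) : ℂ) *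
          (-Complex.I * ((a ℓ)⁻¹ * ((-1)^K * ((∏ j, a j) * (a ℓ)⁻¹) *
            (∏ j ∈ univ.erase ℓ, (a ℓ - a j))⁻¹)))
          = ((-Complex.I)^(n+3) / (((n+2).factorial : ℕ) : ℂ) * ((-1)^K * (∏ j, a j))) *
            (a ℓ ^ n * (∏ j ∈ univ.erase ℓ, (a ℓ - a j))⁻¹) := by
        intro ℓ
        have h1 := mul_inv_cancel₀ (ha ℓ)
        rw [mul_pow, show a ℓ ^ (n+2) = a ℓ^n * a ℓ * a ℓ by ring,
          show (-Complex.I)^(n+3) = (-Complex.I)^(n+2) * (-Complex.I) by rw [← pow_succ]]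
        linear_combination ((-Complex.I)^(n+2) * (-Complex.I) / (((n+2).factorial : ℕ) : ℂ) *
          ((-1:ℂ)^K * (∏ j, a j)) * (a ℓ^n * (∏ j ∈ univ.erase ℓ, (a ℓ - a j))⁻¹) *
          (a ℓ * (a ℓ)⁻¹ + 1)) * h1
      rw [Finset.sum_congr rfl fun ℓ _ => step ℓ, ← Finset.mul_sum, hk]
    have hsplit := (Summable.sum_add_tsum_nat_add (K+2) hfsum).symm
    have hrange : ∑ i ∈ range (K+2), f i = f 0 + f 1 := by
      rw [Finset.sum_range_succ' f (K+1), Finset.sum_range_succ' (fun i => f (i+1)) K]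
      have hz : ∑ i ∈ range K, f (i+1+1) = 0 := by
        refine Finset.sum_eq_zero fun i hi => ?_
        rw [show i+1+1 = i+2 by ring, hf2 i, if_neg (by simp only [mem_range] at hi; omega),
          mul_zero]
      rw [hz, zero_add]
      ring
    rw [hLHS1, hsplit, hrange, hf0, hf1]
    have hfinal : ∀ m : ℕ, f (m + (K+2))
        = ((-1 : ℂ) ^ m * Complex.I ^ ((K+1) + m) / (Nat.factorial (m + (K+1) + 1) : ℂ)) *
          hsym (K+1) m a * ∏ j, a j := by
      intro m
      rw [show m + (K+1) + 1 = m + K + 2 by omega]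
      rw [show m + (K+2) = (m+K)+2 by ring, hf2 (m+K), if_pos (by omega),
        show m+K-K = m by omega]
      rw [show m+K+3 = (m+K)+3 from rfl]
      have hc := hcoef K m
      rw [div_mul_eq_mul_div, div_mul_eq_mul_div, div_eq_mul_inv, div_eq_mul_inv]
      linear_combination (hsym (K+1) m a * (∏ j, a j) *
        (((m+K+2).factorial : ℂ))⁻¹) * hc
    rw [tsum_congr hfinal]
    ring
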